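/- Let n ≥ 4 and label the vertices of the complete graph by 1,…,n. In the symmetric group S_{2n}, setting a_v = (2v−1 2v) (a transposition) and x_{uv} = (2u−1 2v−1)(2u 2v), and defining y_{uv} = a_u a_v, z_{uv} = x_{uv} y_{uv}, b_{uv|st} = x_{uv} x_{st}, c_{uv|st} = x_{uv} z_{st}, all the constraints of the permutation-graph BCS hold with −1 replaced by the central element J = (1 2)(3 4)⋯(2n−1 2n), and moreover all variables appearing in a common constraint commute, and J ≠ e. -/

import Mathlib

/-- Vertex `v` ↦ point `2v` (0-indexed version of `2v − 1`). -/
def idx0 {n : ℕ} (v : Fin n) : Fin (2 * n) := ⟨2 * v.1, by have := v.isLt; omega⟩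
/-- Vertex `v` ↦ point `2v + 1` (0-indexed version of `2v`). -/
def idx1 {n : ℕ} (v : Fin n) : Fin (2 * n) := ⟨2 * v.1 + 1, by have := v.isLt; omega⟩

/-- `a_v = (2v−1  2v)`. -/
def aPerm {n : ℕ} (v : Fin n) : Equiv.Perm (Fin (2 * n)) := Equiv.swap (idx0 v) (idx1 v)
/-- `x_{uv} = (2u−1  2v−1)(2u  2v)`. -/
def xPerm {n : ℕ} (u v : Fin n) : Equiv.Perm (Fin (2 * n)) :=
  Equiv.swap (idx0 u) (idx0 v) * Equiv.swap (idx1 u) (idx1 v)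
/-- `y_{uv} = a_u a_v`. -/
def yPerm {n : ℕ} (u v : Fin n) : Equiv.Perm (Fin (2 * n)) := aPerm u * aPerm v
/-- `z_{uv} = x_{uv} y_{uv}`. -/
def zPerm {n : ℕ} (u v : Fin n) : Equiv.Perm (Fin (2 * n)) := xPerm u v * yPerm u v
/-- `b_{uv|st} = x_{uv} x_{st}`. -/
def bPerm {n : ℕ} (u v s t : Fin n) : Equiv.Perm (Fin (2 * n)) := xPerm u v * xPerm s t
/-- `c_{uv|st} = x_{uv} z_{st}`. -/
def cPerm {n : ℕ} (u v s t : Fin n) : Equiv.Perm (Fin (2 * n)) := xPerm u v * zPerm s t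

/-- Four pairwise distinct vertices. -/
def Dist4 {n : ℕ} (u v s t : Fin n) : Prop :=
  u ≠ v ∧ u ≠ s ∧ u ≠ t ∧ v ≠ s ∧ v ≠ t ∧ s ≠ t

def Jfun (n : ℕ) (k : Fin (2 * n)) : Fin (2 * n) :=
  ⟨2 * (k.1 / 2) + (1 - k.1 % 2), by have := k.isLt; omega⟩

/-- `J = (1 2)(3 4)⋯(2n−1 2n)`, swapping each pair `{2i, 2i+1}` (0-indexed). -/
def Jperm (n : ℕ) : Equiv.Perm (Fin (2 * n)) :=
  Function.Involutive.toPerm (Jfun n)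
    (by intro k; apply Fin.ext; simp only [Jfun]; omega)

open Equiv

section Aux
variable {n : ℕ}

private lemma idx0_ne_idx1 (v w : Fin n) : idx0 v ≠ idx1 w := by
  intro h
  have := congrArg Fin.val h
  simp only [idx0, idx1] at this
  omega

private lemma idx1_ne_idx0 (v w : Fin n) : idx1 v ≠ idx0 w :=
  (idx0_ne_idx1 w v).symm

private lemma idx0_ne {v w : Fin n} (h : v ≠ w) : idx0 v ≠ idx0 w := by
  intro hc
  apply h
  have := congrArg Fin.val hc
  simp only [idx0] at this
  exact Fin.ext (by omega)

private lemma idx1_ne {v w : Fin n} (h : v ≠ w) : idx1 v ≠ idx1 w := by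
  intro hc
  apply h
  have := congrArg Fin.val hc
  simp only [idx1] at this
  exact Fin.ext (by omega)

private lemma swap_comm' {α : Type*} [DecidableEq α] {a b c d : α}
    (h1 : a ≠ c) (h2 : a ≠ d) (h3 : b ≠ c) (h4 : b ≠ d) :
    Commute (Equiv.swap a b) (Equiv.swap c d) := by
  apply Equiv.Perm.Disjoint.commute
  intro x
  by_cases hxa : x = a
  · right; subst hxa; exact swap_apply_of_ne_of_ne h1 h2
  by_cases hxb : x = b
  · right; subst hxb; exact swap_apply_of_ne_of_ne h3 h4
  · left; exact swap_apply_of_ne_of_ne hxa hxb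

private lemma a_sq (v : Fin n) : aPerm v * aPerm v = 1 := Equiv.swap_mul_self _ _

private lemma a_comm (u v : Fin n) : Commute (aPerm u) (aPerm v) := by
  by_cases h : u = v
  · subst h; exact Commute.refl _
  · exact swap_comm' (idx0_ne h) (idx0_ne_idx1 _ _) (idx1_ne_idx0 _ _) (idx1_ne h)

private lemma x_sq (u v : Fin n) : xPerm u v * xPerm u v = 1 := by
  have hc : Commute (Equiv.swap (idx1 u) (idx1 v)) (Equiv.swap (idx0 u) (idx0 v)) :=
    swap_comm' (idx1_ne_idx0 _ _) (idx1_ne_idx0 _ _) (idx1_ne_idx0 _ _) (idx1_ne_idx0 _ _)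
  show Equiv.swap (idx0 u) (idx0 v) * Equiv.swap (idx1 u) (idx1 v) *
      (Equiv.swap (idx0 u) (idx0 v) * Equiv.swap (idx1 u) (idx1 v)) = 1
  rw [hc.mul_mul_mul_comm, Equiv.swap_mul_self, Equiv.swap_mul_self, one_mul]

private lemma y_sq (u v : Fin n) : yPerm u v * yPerm u v = 1 := by
  show aPerm u * aPerm v * (aPerm u * aPerm v) = 1
  rw [(a_comm v u).mul_mul_mul_comm, a_sq, a_sq, one_mul]

private lemma x_comm_a {u v w : Fin n} (h1 : w ≠ u) (h2 : w ≠ v) :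
    Commute (xPerm u v) (aPerm w) :=
  Commute.mul_left
    (swap_comm' (idx0_ne h1.symm) (idx1_ne_idx0 w u).symm (idx0_ne h2.symm)
      (idx1_ne_idx0 w v).symm)
    (swap_comm' (idx0_ne_idx1 w u).symm (idx1_ne h1.symm) (idx0_ne_idx1 w v).symm
      (idx1_ne h2.symm))

private lemma x_comm_x {u v s t : Fin n} (h1 : u ≠ s) (h2 : u ≠ t) (h3 : v ≠ s) (h4 : v ≠ t) :
    Commute (xPerm u v) (xPerm s t) :=
  Commute.mul_left
    (Commute.mul_right
      (swap_comm' (idx0_ne h1) (idx0_ne h2) (idx0_ne h3) (idx0_ne h4))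
      (swap_comm' (idx0_ne_idx1 _ _) (idx0_ne_idx1 _ _) (idx0_ne_idx1 _ _) (idx0_ne_idx1 _ _)))
    (Commute.mul_right
      (swap_comm' (idx1_ne_idx0 _ _) (idx1_ne_idx0 _ _) (idx1_ne_idx0 _ _) (idx1_ne_idx0 _ _))
      (swap_comm' (idx1_ne h1) (idx1_ne h2) (idx1_ne h3) (idx1_ne h4)))

private lemma x_comm_y {u v s t : Fin n} (h1 : s ≠ u) (h2 : s ≠ v) (h3 : t ≠ u) (h4 : t ≠ v) :
    Commute (xPerm u v) (yPerm s t) :=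
  Commute.mul_right (x_comm_a h1 h2) (x_comm_a h3 h4)

private lemma x_apply0 (u v w : Fin n) : xPerm u v (idx0 w) = idx0 (Equiv.swap u v w) := by
  simp only [xPerm, Equiv.Perm.mul_apply]
  rw [swap_apply_of_ne_of_ne (idx0_ne_idx1 w u) (idx0_ne_idx1 w v)]
  by_cases hu : w = u
  · subst hu; rw [swap_apply_left, swap_apply_left]
  by_cases hv : w = v
  · subst hv; rw [swap_apply_right, swap_apply_right]
  · rw [swap_apply_of_ne_of_ne (idx0_ne hu) (idx0_ne hv), swap_apply_of_ne_of_ne hu hv]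

private lemma x_apply1 (u v w : Fin n) : xPerm u v (idx1 w) = idx1 (Equiv.swap u v w) := by
  simp only [xPerm, Equiv.Perm.mul_apply]
  by_cases hu : w = u
  · subst hu
    rw [swap_apply_left, swap_apply_of_ne_of_ne (idx1_ne_idx0 _ _) (idx1_ne_idx0 _ _),
      swap_apply_left]
  by_cases hv : w = v
  · subst hv
    rw [swap_apply_right, swap_apply_of_ne_of_ne (idx1_ne_idx0 _ _) (idx1_ne_idx0 _ _),
      swap_apply_right]
  · rw [swap_apply_of_ne_of_ne (idx1_ne hu) (idx1_ne hv),
      swap_apply_of_ne_of_ne (idx1_ne_idx0 w u) (idx1_ne_idx0 w v),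
      swap_apply_of_ne_of_ne hu hv]

private lemma a_apply0 (v w : Fin n) :
    aPerm v (idx0 w) = if w = v then idx1 v else idx0 w := by
  by_cases h : w = v
  · subst h; simp [aPerm, swap_apply_left]
  · simp only [aPerm, if_neg h]
    exact swap_apply_of_ne_of_ne (idx0_ne h) (idx0_ne_idx1 w v)

private lemma a_apply1 (v w : Fin n) :
    aPerm v (idx1 w) = if w = v then idx0 v else idx1 w := by
  by_cases h : w = v
  · subst h; simp [aPerm, swap_apply_right]
  · simp only [aPerm, if_neg h]
    exact swap_apply_of_ne_of_ne (idx1_ne_idx0 w v) (idx1_ne h)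

private lemma idx_surj (k : Fin (2 * n)) : (∃ w, k = idx0 w) ∨ (∃ w, k = idx1 w) := by
  have hk := k.isLt
  rcases Nat.even_or_odd k.1 with ⟨m, hm⟩ | ⟨m, hm⟩
  · exact Or.inl ⟨⟨m, by omega⟩, Fin.ext (by simp only [idx0]; omega)⟩
  · exact Or.inr ⟨⟨m, by omega⟩, Fin.ext (by simp only [idx1]; omega)⟩

private lemma comm_xy {u v : Fin n} (h : u ≠ v) : Commute (xPerm u v) (yPerm u v) := by
  have hs := h.symm
  have key : xPerm u v * yPerm u v = yPerm u v * xPerm u v := by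
    ext k
    rcases idx_surj k with ⟨w, rfl⟩ | ⟨w, rfl⟩ <;>
      by_cases hu : w = u <;> by_cases hv : w = v <;>
        simp_all [Equiv.Perm.mul_apply, yPerm, x_apply0, x_apply1, a_apply0, a_apply1,
          Equiv.swap_apply_def]
  exact key

private lemma z_sq {u v : Fin n} (h : u ≠ v) : zPerm u v * zPerm u v = 1 := by
  show xPerm u v * yPerm u v * (xPerm u v * yPerm u v) = 1
  rw [(comm_xy h).symm.mul_mul_mul_comm, x_sq, y_sq, one_mul]

private lemma b_sq {u v s t : Fin n} (h1 : u ≠ s) (h2 : u ≠ t) (h3 : v ≠ s) (h4 : v ≠ t) :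
    bPerm u v s t * bPerm u v s t = 1 := by
  show xPerm u v * xPerm s t * (xPerm u v * xPerm s t) = 1
  rw [(x_comm_x h1 h2 h3 h4).symm.mul_mul_mul_comm, x_sq, x_sq, one_mul]

private lemma x_comm_z {u v s t : Fin n} (h1 : u ≠ s) (h2 : u ≠ t) (h3 : v ≠ s) (h4 : v ≠ t) :
    Commute (xPerm u v) (zPerm s t) :=
  Commute.mul_right (x_comm_x h1 h2 h3 h4) (x_comm_y h1.symm h3.symm h2.symm h4.symm)

private lemma c_sq {u v s t : Fin n} (h1 : u ≠ s) (h2 : u ≠ t) (h3 : v ≠ s) (h4 : v ≠ t)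
    (h5 : s ≠ t) : cPerm u v s t * cPerm u v s t = 1 := by
  show xPerm u v * zPerm s t * (xPerm u v * zPerm s t) = 1
  rw [(x_comm_z h1 h2 h3 h4).symm.mul_mul_mul_comm, x_sq, z_sq h5, one_mul]

private lemma vklein {u v s t : Fin n} (hd : Dist4 u v s t) (w : Fin n) :
    Equiv.swap u v (Equiv.swap s t (Equiv.swap v s (Equiv.swap u t
      (Equiv.swap s u (Equiv.swap v t w))))) = w := by
  obtain ⟨h1, h2, h3, h4, h5, h6⟩ := hd
  have := h1.symm; have := h2.symm; have := h3.symm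
  have := h4.symm; have := h5.symm; have := h6.symm
  by_cases hu : w = u <;> by_cases hv : w = v <;> by_cases hs : w = s <;> by_cases ht : w = t <;>
    simp_all [Equiv.swap_apply_def]

private lemma b_triple {u v s t : Fin n} (hd : Dist4 u v s t) :
    bPerm u v s t * bPerm v s u t * bPerm s u v t = 1 := by
  ext k
  simp only [bPerm, Equiv.Perm.mul_apply, Equiv.Perm.one_apply]
  rcases idx_surj k with ⟨w, rfl⟩ | ⟨w, rfl⟩ <;>
    simp only [x_apply0, x_apply1, vklein hd]

private lemma c_triple {u v s t : Fin n} (hd : Dist4 u v s t) :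
    cPerm u v s t * cPerm v s u t * cPerm s u v t = 1 := by
  obtain ⟨h1, h2, h3, h4, h5, h6⟩ := hd
  have := h1.symm; have := h2.symm; have := h3.symm
  have := h4.symm; have := h5.symm; have := h6.symm
  ext k
  simp only [cPerm, zPerm, yPerm, Equiv.Perm.mul_apply, Equiv.Perm.one_apply]
  rcases idx_surj k with ⟨w, rfl⟩ | ⟨w, rfl⟩ <;>
    by_cases hu : w = u <;> by_cases hv : w = v <;> by_cases hs : w = s <;>
      by_cases ht : w = t <;>
      simp_all [x_apply0, x_apply1, a_apply0, a_apply1, Equiv.swap_apply_def]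

private lemma triple_comm {G : Type*} [Group G] {p q r : G}
    (hp : p * p = 1) (hq : q * q = 1) (hr : r * r = 1) (h : p * q * r = 1) :
    Commute p q ∧ Commute p r ∧ Commute q r := by
  have hpi : p⁻¹ = p := inv_eq_of_mul_eq_one_left hp
  have hqi : q⁻¹ = q := inv_eq_of_mul_eq_one_left hq
  have hri : r⁻¹ = r := inv_eq_of_mul_eq_one_left hr
  have h1 : r = q * p := by
    have h' : (p * q)⁻¹ = r := inv_eq_of_mul_eq_one_right h
    rw [← h', mul_inv_rev, hpi, hqi]
  have h2 : r = p * q := by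
    rw [← hri, h1, mul_inv_rev, hpi, hqi]
  have hpq : Commute p q := by unfold Commute SemiconjBy; rw [← h2, ← h1]
  refine ⟨hpq, ?_, ?_⟩
  · rw [h2]; exact (Commute.refl p).mul_right hpq
  · rw [h2]; exact hpq.symm.mul_right (Commute.refl q)

private lemma pw3 {G : Type*} [Monoid G] {p q r : G}
    (h1 : Commute p q) (h2 : Commute p r) (h3 : Commute q r) :
    List.Pairwise Commute [p, q, r] := by
  refine List.Pairwise.cons ?_ (List.Pairwise.cons ?_ (List.Pairwise.cons
    (fun a ha => absurd ha List.not_mem_nil) List.Pairwise.nil))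
  · intro a ha
    rcases List.mem_cons.mp ha with rfl | ha'
    · exact h1
    · rcases List.mem_singleton.mp ha' with rfl
      exact h2
  · intro a ha
    rcases List.mem_singleton.mp ha with rfl
    exact h3

private lemma prod_fix {α : Type*} (l : List (Equiv.Perm α)) (x : α)
    (h : ∀ g ∈ l, g x = x) : l.prod x = x := by
  induction l with
  | nil => rfl
  | cons g l ih =>
    rw [List.prod_cons, Equiv.Perm.mul_apply,
      ih (fun g' hg' => h g' (List.mem_cons_of_mem _ hg')), h g List.mem_cons_self]

private lemma a_fix {v w : Fin n} (hvw : v ≠ w) {p : Fin (2 * n)}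
    (hp : p = idx0 w ∨ p = idx1 w) : aPerm v p = p := by
  rcases hp with rfl | rfl
  · exact swap_apply_of_ne_of_ne (idx0_ne (Ne.symm hvw)) (idx0_ne_idx1 w v)
  · exact swap_apply_of_ne_of_ne (idx1_ne_idx0 w v) (idx1_ne (Ne.symm hvw))

private lemma J_apply0 (w : Fin n) : Jperm n (idx0 w) = idx1 w := by
  apply Fin.ext
  show (Jfun n (idx0 w)).1 = (idx1 w).1
  simp only [Jperm, Function.Involutive.coe_toPerm, Jfun, idx0, idx1]
  omega

private lemma J_apply1 (w : Fin n) : Jperm n (idx1 w) = idx0 w := by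
  apply Fin.ext
  show (Jfun n (idx1 w)).1 = (idx0 w).1
  simp only [Jperm, Function.Involutive.coe_toPerm, Jfun, idx0, idx1]
  omega

private lemma prod_a : (List.ofFn fun v : Fin n => aPerm v).prod = Jperm n := by
  apply Equiv.ext
  intro k
  obtain ⟨w, hk⟩ : ∃ w : Fin n, k = idx0 w ∨ k = idx1 w := by
    rcases idx_surj k with ⟨w, rfl⟩ | ⟨w, rfl⟩
    exacts [⟨w, Or.inl rfl⟩, ⟨w, Or.inr rfl⟩]
  obtain ⟨s, t, hst⟩ := List.append_of_mem (List.mem_finRange w)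
  have hnd := List.nodup_finRange n
  rw [hst, List.nodup_append] at hnd
  obtain ⟨-, hnd2, hdisj⟩ := hnd
  have hws : w ∉ s := fun hmem => hdisj w hmem w List.mem_cons_self rfl
  have hwt : w ∉ t := (List.nodup_cons.mp hnd2).1
  rw [List.ofFn_eq_map, hst, List.map_append, List.map_cons, List.prod_append, List.prod_cons]
  simp only [Equiv.Perm.mul_apply]
  have ht : (List.map aPerm t).prod k = k := by
    apply prod_fix
    intro g hg
    obtain ⟨w', hw', rfl⟩ := List.mem_map.mp hg
    exact a_fix (v := w') (w := w) (fun hc => hwt (by rw [← hc]; exact hw')) hk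
  rw [ht]
  have haw : aPerm w k = Jperm n k := by
    rcases hk with rfl | rfl
    · rw [J_apply0, a_apply0, if_pos rfl]
    · rw [J_apply1, a_apply1, if_pos rfl]
  rw [haw]
  apply prod_fix
  intro g hg
  obtain ⟨w', hw', rfl⟩ := List.mem_map.mp hg
  apply a_fix (v := w') (w := w) (fun hc => hws (by rw [← hc]; exact hw'))
  rcases hk with rfl | rfl
  · rw [J_apply0]; exact Or.inr rfl
  · rw [J_apply1]; exact Or.inl rfl

end Aux

theorem stmt11 (n : ℕ) (hn : 4 ≤ n) :
    (∀ u v : Fin n, u ≠ v → aPerm u * aPerm v * yPerm u v = 1 ∧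
        List.Pairwise Commute [aPerm u, aPerm v, yPerm u v]) ∧
    (∀ u v : Fin n, u ≠ v → xPerm u v * yPerm u v * zPerm u v = 1 ∧
        List.Pairwise Commute [xPerm u v, yPerm u v, zPerm u v]) ∧
    (∀ u v s t : Fin n, Dist4 u v s t → xPerm u v * xPerm s t * bPerm u v s t = 1 ∧
        List.Pairwise Commute [xPerm u v, xPerm s t, bPerm u v s t]) ∧
    (∀ u v s t : Fin n, Dist4 u v s t → xPerm u v * zPerm s t * cPerm u v s t = 1 ∧
        List.Pairwise Commute [xPerm u v, zPerm s t, cPerm u v s t]) ∧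
    (∀ u v s t : Fin n, Dist4 u v s t →
        bPerm u v s t * bPerm v s u t * bPerm s u v t = 1 ∧
        List.Pairwise Commute [bPerm u v s t, bPerm v s u t, bPerm s u v t]) ∧
    (∀ u v s t : Fin n, Dist4 u v s t →
        cPerm u v s t * cPerm v s u t * cPerm s u v t = 1 ∧
        List.Pairwise Commute [cPerm u v s t, cPerm v s u t, cPerm s u v t]) ∧
    ((List.ofFn fun v : Fin n => aPerm v).prod = Jperm n ∧
        ∀ u v : Fin n, Commute (aPerm u) (aPerm v)) ∧
    Jperm n ≠ 1 := by
  refine ⟨?_, ?_, ?_, ?_, ?_, ?_, ⟨prod_a, fun u v => a_comm u v⟩, ?_⟩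
  · intro u v h
    refine ⟨y_sq u v, pw3 (a_comm u v) ((Commute.refl _).mul_right (a_comm u v))
      ((a_comm v u).mul_right (Commute.refl _))⟩
  · intro u v h
    have hxy := comm_xy h
    refine ⟨?_, pw3 hxy ((Commute.refl _).mul_right hxy) (hxy.symm.mul_right (Commute.refl _))⟩
    show xPerm u v * yPerm u v * (xPerm u v * yPerm u v) = 1
    rw [hxy.symm.mul_mul_mul_comm, x_sq, y_sq, one_mul]
  · intro u v s t hd
    obtain ⟨h1, h2, h3, h4, h5, h6⟩ := hd
    have hxx := x_comm_x h2 h3 h4 h5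
    refine ⟨b_sq h2 h3 h4 h5, pw3 hxx ((Commute.refl _).mul_right hxx)
      (hxx.symm.mul_right (Commute.refl _))⟩
  · intro u v s t hd
    obtain ⟨h1, h2, h3, h4, h5, h6⟩ := hd
    have hxz := x_comm_z h2 h3 h4 h5
    refine ⟨c_sq h2 h3 h4 h5 h6, pw3 hxz ((Commute.refl _).mul_right hxz)
      (hxz.symm.mul_right (Commute.refl _))⟩
  · intro u v s t hd
    obtain ⟨h1, h2, h3, h4, h5, h6⟩ := hd
    have hb1 := b_sq h2 h3 h4 h5
    have hb2 := b_sq h1.symm h5 h2.symm h6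
    have hb3 := b_sq h4.symm h6 h1 h3
    obtain ⟨c1, c2, c3⟩ := triple_comm hb1 hb2 hb3 (b_triple ⟨h1, h2, h3, h4, h5, h6⟩)
    exact ⟨b_triple ⟨h1, h2, h3, h4, h5, h6⟩, pw3 c1 c2 c3⟩
  · intro u v s t hd
    obtain ⟨h1, h2, h3, h4, h5, h6⟩ := hd
    have hc1 := c_sq h2 h3 h4 h5 h6
    have hc2 := c_sq h1.symm h5 h2.symm h6 h3
    have hc3 := c_sq h4.symm h6 h1 h3 h5
    obtain ⟨c1, c2, c3⟩ := triple_comm hc1 hc2 hc3 (c_triple ⟨h1, h2, h3, h4, h5, h6⟩)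
    exact ⟨c_triple ⟨h1, h2, h3, h4, h5, h6⟩, pw3 c1 c2 c3⟩
  · intro hJ
    have h0 : 0 < 2 * n := by omega
    have := congrArg (fun f : Equiv.Perm (Fin (2 * n)) => (f ⟨0, h0⟩).1) hJ
    change (Jfun n ⟨0, h0⟩).1 = (⟨0, h0⟩ : Fin (2 * n)).1 at this
    simp only [Jperm, Function.Involutive.coe_toPerm, Jfun, Equiv.Perm.one_apply] at this
    omega
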